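/- Let n, λ, μ, b ∈ ℂ with μ ≠ 0, b ∉ ℤ and b + n ∉ ℤ. For m ≥ 0 let S_m be the 2×2 complex matrix with rows (1 + (λ − n + 2)/((b−m+1)(b−m+n−2)), μ²(b−m+n−1)/((b−m+1)(b−m+n−2)(b−m+n−3))) and (1, 0). Then the infinite products T_m = S_m S_{m+1} ⋯ exist for every m ≥ 0. Set ĉ_m = (T_m)_{21} for m ≥ 0, â_m = ĉ_m μ^m / ((2−n−b)(3−n−b)⋯(2−n−b+m)) (the Pochhammer product of m+1 factors), and a_k = â_{−k} for k ≤ 0. Then the sequence (a_k)_{k≤0} satisfies the Heun recurrence at every k ≤ −1, and the power series ∑_{m≥0} a_{−m} w^m has infinite radius of convergence. -/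

import Mathlib

open Filter Topology Matrix

/-- The ordered partial product `S m * S (m+1) * ⋯ * S (m+n)`. -/
def opProd {A : Type*} [Mul A] (M : ℕ → A) (k : ℕ) : ℕ → A
  | 0 => M k
  | n + 1 => opProd M k n * M (k + n + 1)

/-- The Heun recurrence with parameters `n, λ, μ, b` at index `k`, relating consecutive
coefficients `x = a (k-1)`, `y = a k`, `z = a (k+1)`. -/
def HeunRec (n lam mu b : ℂ) (x y z k : ℂ) : Prop :=
  ((k + b) * (k + b + n - 1) + lam) * y - mu * (k + b + n - 1) * x + mu * (k + b + 1) * z = 0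

lemma opProd_left {A : Type*} [Semigroup A] (M : ℕ → A) (k : ℕ) :
    ∀ j, opProd M k (j + 1) = M k * opProd M (k + 1) j := by
  intro j
  induction j with
  | zero => show opProd M k 0 * M (k + 0 + 1) = _ ; simp [opProd]
  | succ j ih =>
      show opProd M k (j + 1) * M (k + (j+1) + 1) = _
      rw [ih, mul_assoc]
      congr 2
      show M (k + (j+1) + 1) = M (k + 1 + j + 1)
      congr 1; omega

lemma conv_aux (x : ℕ → ℂ) (ε : ℕ → ℝ) (hε : Summable ε) (hεnn : ∀ j, 0 ≤ ε j)
    (B : ℝ) (hB0 : ‖x 0‖ ≤ B) (hB1 : ‖x 1‖ ≤ B)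
    (hrec : ∀ j, ‖x (j + 2) - x (j + 1)‖ ≤ (‖x (j + 1)‖ + ‖x j‖) * ε j) :
    ∃ L : ℂ, Tendsto x atTop (nhds L) ∧
      ∀ j, ‖x j‖ ≤ B * Real.exp (2 * ∑' i, ε i) := by
  have hB : 0 ≤ B := le_trans (norm_nonneg _) hB0
  have htnn : 0 ≤ ∑' i, ε i := tsum_nonneg hεnn
  have hpart : ∀ j, ∑ i ∈ Finset.range j, ε i ≤ ∑' i, ε i := fun j =>
    Summable.sum_le_tsum _ (fun i _ => hεnn i) hε
  have key : ∀ j, max ‖x j‖ ‖x (j + 1)‖ ≤ B * Real.exp (2 * ∑ i ∈ Finset.range j, ε i) := by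
    intro j
    induction j with
    | zero =>
        simp only [Finset.range_zero, Finset.sum_empty, mul_zero, Real.exp_zero, mul_one]
        exact max_le hB0 hB1
    | succ j ih =>
        have hle : max ‖x j‖ ‖x (j+1)‖ ≤ B * Real.exp (2 * ∑ i ∈ Finset.range j, ε i) := ih
        have h1 : ‖x (j + 1)‖ ≤ B * Real.exp (2 * ∑ i ∈ Finset.range j, ε i) :=
          le_trans (le_max_right _ _) hle
        have h0 : ‖x j‖ ≤ B * Real.exp (2 * ∑ i ∈ Finset.range j, ε i) :=
          le_trans (le_max_left _ _) hle
        have hx2 : ‖x (j + 2)‖ ≤ B * Real.exp (2 * ∑ i ∈ Finset.range j, ε i) * (1 + 2 * ε j) := by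
          have := hrec j
          have h3 : ‖x (j + 2)‖ ≤ ‖x (j+1)‖ + (‖x (j + 1)‖ + ‖x j‖) * ε j := by
            calc ‖x (j + 2)‖ = ‖x (j+1) + (x (j + 2) - x (j + 1))‖ := by ring_nf
              _ ≤ ‖x (j+1)‖ + ‖x (j + 2) - x (j + 1)‖ := norm_add_le _ _
              _ ≤ _ := by linarith
          have h4 : (‖x (j + 1)‖ + ‖x j‖) * ε j ≤
              (2 * (B * Real.exp (2 * ∑ i ∈ Finset.range j, ε i))) * ε j := by
            apply mul_le_mul_of_nonneg_right _ (hεnn j); linarith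
          nlinarith [hεnn j]
        have hexp : (1 : ℝ) + 2 * ε j ≤ Real.exp (2 * ε j) := by
          have := Real.add_one_le_exp (2 * ε j); linarith
        have hEnn : (0:ℝ) < Real.exp (2 * ∑ i ∈ Finset.range j, ε i) := Real.exp_pos _
        have hsplit : Real.exp (2 * ∑ i ∈ Finset.range (j+1), ε i)
            = Real.exp (2 * ∑ i ∈ Finset.range j, ε i) * Real.exp (2 * ε j) := by
          rw [Finset.sum_range_succ, mul_add, Real.exp_add]
        have hone : (1:ℝ) ≤ Real.exp (2 * ε j) :=
          Real.one_le_exp (by nlinarith [hεnn j])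
        have step : B * Real.exp (2 * ∑ i ∈ Finset.range j, ε i) * (1 + 2 * ε j)
            ≤ B * Real.exp (2 * ∑ i ∈ Finset.range (j+1), ε i) := by
          rw [hsplit, ← mul_assoc]
          apply mul_le_mul_of_nonneg_left hexp
          positivity
        refine max_le ?_ ?_
        · refine le_trans h1 ?_
          rw [hsplit, ← mul_assoc]
          nlinarith [Real.exp_pos (2 * ∑ i ∈ Finset.range j, ε i), mul_nonneg hB hEnn.le]
        · exact le_trans hx2 step
  set C := B * Real.exp (2 * ∑' i, ε i) with hC
  have hbd : ∀ j, ‖x j‖ ≤ C := by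
    intro j
    refine le_trans (le_trans (le_max_left _ _) (key j)) ?_
    have : Real.exp (2 * ∑ i ∈ Finset.range j, ε i) ≤ Real.exp (2 * ∑' i, ε i) := by
      apply Real.exp_le_exp.2; linarith [hpart j]
    nlinarith
  have hdiff : Summable (fun j => x (j + 1) - x j) := by
    rw [← summable_nat_add_iff 1]
    apply Summable.of_norm_bounded (g := fun j => 2 * C * ε j) (hε.mul_left _)
    intro j
    calc ‖x (j + 1 + 1) - x (j + 1)‖ ≤ (‖x (j+1)‖ + ‖x j‖) * ε j := hrec j
      _ ≤ 2 * C * ε j := by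
          apply mul_le_mul_of_nonneg_right _ (hεnn j)
          linarith [hbd j, hbd (j+1)]
  refine ⟨x 0 + ∑' j, (x (j + 1) - x j), ?_, hbd⟩
  have := hdiff.hasSum.tendsto_sum_nat
  have h2 : Tendsto (fun j => x 0 + ∑ i ∈ Finset.range j, (x (i + 1) - x i)) atTop
      (nhds (x 0 + ∑' j, (x (j + 1) - x j))) := tendsto_const_nhds.add this
  convert h2 using 2 with j
  rw [Finset.sum_range_sub]
  ring

lemma sumE (n lam mu b : ℂ) :
    Summable (fun j : ℕ => ‖(lam - n + 2) / ((b - (j:ℂ) + 1) * (b - (j:ℂ) + n - 2))‖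
      + ‖mu ^ 2 * (b - (j:ℂ) + n - 1) /
          ((b - (j:ℂ) + 1) * (b - (j:ℂ) + n - 2) * (b - (j:ℂ) + n - 3))‖) := by
  set A := ‖lam - n + 2‖ with hA
  set M := ‖mu‖ ^ 2 with hM
  have hg : Summable (fun j : ℕ => (4 * A + 16 * M) * (1 / (j:ℝ) ^ 2)) :=
    (Real.summable_one_div_nat_pow.mpr (by norm_num)).mul_left _
  apply Summable.of_norm_bounded_eventually_nat hg
  filter_upwards [eventually_ge_atTop (⌈2 * (‖b‖ + ‖n‖ + 4)⌉₊)] with j hj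
  have hr : 2 * (‖b‖ + ‖n‖ + 4) ≤ (j:ℝ) := le_trans (Nat.le_ceil _) (by exact_mod_cast hj)
  set r : ℝ := (j:ℝ) with hrdef
  have hbnn : (0:ℝ) ≤ ‖b‖ := norm_nonneg _
  have hnnn : (0:ℝ) ≤ ‖n‖ := norm_nonneg _
  have hr8 : (8:ℝ) ≤ r := by linarith
  have hr0 : (0:ℝ) < r := by linarith
  have hjc : ‖(j:ℂ)‖ = r := by rw [Complex.norm_natCast]
  have key : ∀ c : ℂ, ‖c‖ ≤ r / 2 → r / 2 ≤ ‖c - (j:ℂ)‖ := by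
    intro c hc
    have h1 := norm_sub_norm_le ((j:ℂ)) c
    rw [hjc] at h1
    have h2 : ‖(j:ℂ) - c‖ = ‖c - (j:ℂ)‖ := norm_sub_rev _ _
    linarith
  have h1 : r / 2 ≤ ‖b - (j:ℂ) + 1‖ := by
    have : b - (j:ℂ) + 1 = (b + 1) - (j:ℂ) := by ring
    rw [this]
    apply key
    calc ‖b + 1‖ ≤ ‖b‖ + 1 := norm_add_le_of_le le_rfl (by norm_num)
      _ ≤ r / 2 := by linarith
  have h2 : r / 2 ≤ ‖b - (j:ℂ) + n - 2‖ := by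
    have : b - (j:ℂ) + n - 2 = (b + n - 2) - (j:ℂ) := by ring
    rw [this]
    apply key
    calc ‖b + n - 2‖ ≤ ‖b + n‖ + 2 := norm_sub_le_of_le le_rfl (by norm_num)
      _ ≤ ‖b‖ + ‖n‖ + 2 := by linarith [norm_add_le b n]
      _ ≤ r / 2 := by linarith
  have h3 : r / 2 ≤ ‖b - (j:ℂ) + n - 3‖ := by
    have : b - (j:ℂ) + n - 3 = (b + n - 3) - (j:ℂ) := by ring
    rw [this]
    apply key
    calc ‖b + n - 3‖ ≤ ‖b + n‖ + 3 := norm_sub_le_of_le le_rfl (by norm_num)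
      _ ≤ ‖b‖ + ‖n‖ + 3 := by linarith [norm_add_le b n]
      _ ≤ r / 2 := by linarith
  have h4 : ‖b - (j:ℂ) + n - 1‖ ≤ 2 * r := by
    have heq : b - (j:ℂ) + n - 1 = (b + n - 1) - (j:ℂ) := by ring
    rw [heq]
    calc ‖(b + n - 1) - (j:ℂ)‖ ≤ ‖b + n - 1‖ + ‖(j:ℂ)‖ := norm_sub_le _ _
      _ ≤ (‖b‖ + ‖n‖ + 1) + r := by
          rw [hjc]
          have : ‖b + n - 1‖ ≤ ‖b + n‖ + 1 := norm_sub_le_of_le le_rfl (by norm_num)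
          linarith [norm_add_le b n]
      _ ≤ 2 * r := by linarith
  have hq : (0:ℝ) < r / 2 := by linarith
  have hA0 : 0 ≤ A := norm_nonneg _
  have hM0 : (0:ℝ) ≤ M := by positivity
  have t1 : ‖(lam - n + 2) / ((b - (j:ℂ) + 1) * (b - (j:ℂ) + n - 2))‖ ≤ 4 * A * (1 / r ^ 2) := by
    rw [norm_div, norm_mul]
    have hden : r / 2 * (r / 2) ≤ ‖b - (j:ℂ) + 1‖ * ‖b - (j:ℂ) + n - 2‖ :=
      mul_le_mul h1 h2 hq.le (le_trans hq.le h1)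
    calc A / (‖b - (j:ℂ) + 1‖ * ‖b - (j:ℂ) + n - 2‖) ≤ A / (r / 2 * (r / 2)) :=
          div_le_div_of_nonneg_left hA0 (by positivity) hden
      _ = 4 * A * (1 / r ^ 2) := by field_simp; ring
  have t2 : ‖mu ^ 2 * (b - (j:ℂ) + n - 1) /
      ((b - (j:ℂ) + 1) * (b - (j:ℂ) + n - 2) * (b - (j:ℂ) + n - 3))‖ ≤ 16 * M * (1 / r ^ 2) := by
    rw [norm_div, norm_mul, norm_mul, norm_mul, norm_pow]
    have hden : r / 2 * (r / 2) * (r / 2) ≤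
        ‖b - (j:ℂ) + 1‖ * ‖b - (j:ℂ) + n - 2‖ * ‖b - (j:ℂ) + n - 3‖ := by
      apply mul_le_mul _ h3 hq.le (by positivity)
      exact mul_le_mul h1 h2 hq.le (le_trans hq.le h1)
    calc ‖mu‖ ^ 2 * ‖b - (j:ℂ) + n - 1‖ /
          (‖b - (j:ℂ) + 1‖ * ‖b - (j:ℂ) + n - 2‖ * ‖b - (j:ℂ) + n - 3‖)
        ≤ M * (2 * r) / (r / 2 * (r / 2) * (r / 2)) := by
          apply div_le_div₀ (by positivity) (mul_le_mul_of_nonneg_left h4 hM0) (by positivity) hden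
      _ = 16 * M * (1 / r ^ 2) := by field_simp; ring
  rw [Real.norm_eq_abs, abs_of_nonneg (by positivity)]
  calc _ ≤ 4 * A * (1 / r ^ 2) + 16 * M * (1 / r ^ 2) := add_le_add t1 t2
    _ = (4 * A + 16 * M) * (1 / r ^ 2) := by ring

set_option maxHeartbeats 1600000 in
/-- Explicit backward solution via infinite matrix products: for `μ ≠ 0`, `b, b+n ∉ ℤ` and
`S m = !![1 + (λ-n+2)/((b-m+1)(b-m+n-2)), μ²(b-m+n-1)/((b-m+1)(b-m+n-2)(b-m+n-3)); 1, 0]`,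
the infinite products `T m = S m * S (m+1) * ⋯` exist; setting `ĉ m = (T m)₂₁`,
`â m = ĉ m μ^m / ((2-n-b)(3-n-b)⋯(2-n-b+m))` and `a k = â (-k)` for `k ≤ 0`, the sequence
`(a k)_{k ≤ 0}` satisfies the Heun recurrence at every `k ≤ -1`, and `∑_{m ≥ 0} a_{-m} w^m`
converges everywhere. -/
theorem heun_backward_solution_formula
    (n lam mu b : ℂ) (hmu : mu ≠ 0)
    (hb : ∀ m : ℤ, b ≠ (m : ℂ)) (hbn : ∀ m : ℤ, b + n ≠ (m : ℂ))
    (S : ℕ → Matrix (Fin 2) (Fin 2) ℂ)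
    (hS : ∀ m : ℕ,
      S m = !![1 + (lam - n + 2) / ((b - (m : ℂ) + 1) * (b - (m : ℂ) + n - 2)),
               mu ^ 2 * (b - (m : ℂ) + n - 1) /
                 ((b - (m : ℂ) + 1) * (b - (m : ℂ) + n - 2) * (b - (m : ℂ) + n - 3));
               1, 0]) :
    ∃ T : ℕ → Matrix (Fin 2) (Fin 2) ℂ,
      (∀ m : ℕ, Tendsto (fun j => opProd S m j) atTop (nhds (T m))) ∧
      ∀ ah : ℕ → ℂ,
        (∀ m : ℕ,
          ah m = T m 1 0 * mu ^ m / ∏ j ∈ Finset.range (m + 1), (2 - n - b + (j : ℂ))) →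
        (∀ m : ℕ, HeunRec n lam mu b (ah (m + 2)) (ah (m + 1)) (ah m) (-(m : ℂ) - 1)) ∧
        (∀ w : ℂ, Summable fun m : ℕ => ah m * w ^ m) := by
  -- entry values
  have hs00 : ∀ j : ℕ, S j 0 0 = 1 + (lam - n + 2) / ((b - (j:ℂ) + 1) * (b - (j:ℂ) + n - 2)) := by
    intro j; rw [hS j]; simp
  have hs01 : ∀ j : ℕ, S j 0 1 = mu ^ 2 * (b - (j:ℂ) + n - 1) /
      ((b - (j:ℂ) + 1) * (b - (j:ℂ) + n - 2) * (b - (j:ℂ) + n - 3)) := by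
    intro j; rw [hS j]; simp
  have hs10 : ∀ j : ℕ, S j 1 0 = 1 := by intro j; rw [hS j]; simp
  have hs11 : ∀ j : ℕ, S j 1 1 = 0 := by intro j; rw [hS j]; simp
  -- the summable control sequence
  set E : ℕ → ℝ := fun j => ‖S j 0 0 - 1‖ + ‖S j 0 1‖ with hEdef
  have hE : Summable E := by
    refine (sumE n lam mu b).congr fun j => ?_
    rw [hEdef]
    congr 1
    · rw [hs00 j]; ring_nf
    · rw [hs01 j]
  have hEnn : ∀ j, 0 ≤ E j := fun j => add_nonneg (norm_nonneg _) (norm_nonneg _)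
  set tE : ℝ := ∑' j, E j with htEdef
  have htEnn : 0 ≤ tE := tsum_nonneg hEnn
  have hEle : ∀ j, E j ≤ tE := fun j => Summable.le_tsum hE j (fun i _ => hEnn i)
  have hd00 : ∀ j, ‖S j 0 0 - 1‖ ≤ E j := fun j => le_add_of_nonneg_right (norm_nonneg _)
  have hd01 : ∀ j, ‖S j 0 1‖ ≤ E j := fun j => le_add_of_nonneg_left (norm_nonneg _)
  -- partial product entries
  set p : ℕ → ℕ → ℂ := fun m j => opProd S m j 0 0 with hpdef
  set q : ℕ → ℕ → ℂ := fun m j => opProd S m j 0 1 with hqdef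
  have hstep : ∀ m j, opProd S m (j + 1) = opProd S m j * S (m + j + 1) := fun m j => rfl
  have hprec : ∀ m j, p m (j + 1) = p m j * S (m + j + 1) 0 0 + q m j := by
    intro m j
    show opProd S m (j+1) 0 0 = _
    rw [hstep, Matrix.mul_apply, Fin.sum_univ_two, hs10 (m + j + 1)]
    simp [hpdef, hqdef]
  have hqrec : ∀ m j, q m (j + 1) = p m j * S (m + j + 1) 0 1 := by
    intro m j
    show opProd S m (j+1) 0 1 = _
    rw [hstep, Matrix.mul_apply, Fin.sum_univ_two, hs11 (m + j + 1)]
    simp [hpdef, hqdef]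
  have hrow1 : ∀ m j (c : Fin 2), opProd S m (j + 1) 1 c = opProd S (m + 1) j 0 c := by
    intro m j c
    rw [opProd_left, Matrix.mul_apply, Fin.sum_univ_two, hs10 m, hs11 m]
    ring
  -- per-m epsilon
  set ε : ℕ → ℕ → ℝ := fun m j => E (m + j + 2) + E (m + j + 1) with hεdef
  have hεsum : ∀ m, Summable (ε m) := by
    intro m
    apply Summable.add
    · exact ((summable_nat_add_iff (m + 2)).2 hE).congr fun j => congrArg E (by omega)
    · exact ((summable_nat_add_iff (m + 1)).2 hE).congr fun j => congrArg E (by omega)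
  have hεnn : ∀ m j, 0 ≤ ε m j := fun m j => add_nonneg (hEnn _) (hEnn _)
  have hεtsum : ∀ m, ∑' j, ε m j ≤ 2 * tE := by
    intro m
    have e1 : ∑' j, E (j + (m + 2)) ≤ tE := by
      have h := Summable.sum_add_tsum_nat_add (f := E) (m + 2) hE
      have : 0 ≤ ∑ i ∈ Finset.range (m + 2), E i := Finset.sum_nonneg fun i _ => hEnn i
      rw [htEdef]; linarith
    have e2 : ∑' j, E (j + (m + 1)) ≤ tE := by
      have h := Summable.sum_add_tsum_nat_add (f := E) (m + 1) hE
      have : 0 ≤ ∑ i ∈ Finset.range (m + 1), E i := Finset.sum_nonneg fun i _ => hEnn i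
      rw [htEdef]; linarith
    have hsum1 : Summable (fun j => E (j + (m + 2))) := (summable_nat_add_iff (m + 2)).2 hE
    have hsum2 : Summable (fun j => E (j + (m + 1))) := (summable_nat_add_iff (m + 1)).2 hE
    have : ∑' j, ε m j = (∑' j, E (j + (m + 2))) + ∑' j, E (j + (m + 1)) := by
      rw [← Summable.tsum_add hsum1 hsum2]
      apply tsum_congr
      intro j
      show E (m + j + 2) + E (m + j + 1) = _
      rw [show m + j + 2 = j + (m + 2) by omega, show m + j + 1 = j + (m + 1) by omega]
    linarith [this, e1, e2]
  -- bounds at the start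
  set B : ℝ := (1 + tE) ^ 2 + tE with hBdef
  have hs00bd : ∀ j : ℕ, ‖S j 0 0‖ ≤ 1 + tE := by
    intro j
    calc ‖S j 0 0‖ = ‖1 + (S j 0 0 - 1)‖ := by congr 1; ring
      _ ≤ ‖(1:ℂ)‖ + ‖S j 0 0 - 1‖ := norm_add_le _ _
      _ ≤ 1 + tE := by
          rw [norm_one]
          linarith [le_trans (hd00 j) (hEle j)]
  have hs01bd : ∀ j : ℕ, ‖S j 0 1‖ ≤ tE := fun j => le_trans (hd01 j) (hEle j)
  -- convergence for each m
  have hconv : ∀ m, ∃ L : ℂ, Tendsto (p m) atTop (nhds L) ∧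
      ∀ j, ‖p m j‖ ≤ B * Real.exp (2 * ∑' i, ε m i) := by
    intro m
    apply conv_aux (p m) (ε m) (hεsum m) (hεnn m)
    · -- ‖p m 0‖ ≤ B
      have : p m 0 = S m 0 0 := rfl
      rw [this]
      have h := hs00bd m
      nlinarith [htEnn]
    · -- ‖p m 1‖ ≤ B
      have e : p m 1 = p m 0 * S (m + 1) 0 0 + q m 0 := by
        have := hprec m 0
        simpa using this
      have e0 : p m 0 = S m 0 0 := rfl
      have eq0 : q m 0 = S m 0 1 := rfl
      rw [e, e0, eq0]
      calc ‖S m 0 0 * S (m+1) 0 0 + S m 0 1‖ ≤ ‖S m 0 0‖ * ‖S (m+1) 0 0‖ + ‖S m 0 1‖ := by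
            refine le_trans (norm_add_le _ _) ?_
            rw [norm_mul]
        _ ≤ (1 + tE) * (1 + tE) + tE := by
            have a1 := hs00bd m; have a2 := hs00bd (m+1); have a3 := hs01bd m
            have := norm_nonneg (S m 0 0); have := norm_nonneg (S (m+1) 0 0)
            nlinarith
        _ = B := by rw [hBdef]; ring
    · -- recurrence bound
      intro j
      have e1 : p m (j + 2) = p m (j + 1) * S (m + j + 2) 0 0 + q m (j + 1) := by
        have := hprec m (j + 1)
        have h2 : m + (j + 1) + 1 = m + j + 2 := by omega
        rw [h2] at this
        exact this
      have e2 : q m (j + 1) = p m j * S (m + j + 1) 0 1 := hqrec m j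
      have e3 : p m (j + 2) - p m (j + 1)
          = p m (j + 1) * (S (m + j + 2) 0 0 - 1) + p m j * S (m + j + 1) 0 1 := by
        rw [e1, e2]; ring
      rw [e3]
      have b1 : ‖S (m + j + 2) 0 0 - 1‖ ≤ E (m + j + 2) := hd00 _
      have b2 : ‖S (m + j + 1) 0 1‖ ≤ E (m + j + 1) := hd01 _
      calc ‖p m (j + 1) * (S (m + j + 2) 0 0 - 1) + p m j * S (m + j + 1) 0 1‖
          ≤ ‖p m (j + 1)‖ * ‖S (m + j + 2) 0 0 - 1‖ + ‖p m j‖ * ‖S (m + j + 1) 0 1‖ := by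
            refine le_trans (norm_add_le _ _) ?_
            rw [norm_mul, norm_mul]
        _ ≤ (‖p m (j + 1)‖ + ‖p m j‖) * ε m j := by
            have n1 := norm_nonneg (p m (j+1)); have n2 := norm_nonneg (p m j)
            have n3 := norm_nonneg (S (m + j + 2) 0 0 - 1)
            have n4 := norm_nonneg (S (m + j + 1) 0 1)
            have hεval : ε m j = E (m + j + 2) + E (m + j + 1) := rfl
            rw [hεval]
            nlinarith [mul_le_mul_of_nonneg_left b1 n1, mul_le_mul_of_nonneg_left b2 n2,
              mul_nonneg n1 (hEnn (m + j + 1)), mul_nonneg n2 (hEnn (m + j + 2))]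
  -- uniform bound
  set K : ℝ := B * Real.exp (2 * (2 * tE)) with hKdef
  have hBnn : 0 ≤ B := by rw [hBdef]; nlinarith [htEnn]
  have hKbd : ∀ m, ∀ j, ‖p m j‖ ≤ K := by
    intro m j
    obtain ⟨L, hL, hbd⟩ := hconv m
    refine le_trans (hbd j) ?_
    rw [hKdef]
    have : Real.exp (2 * ∑' i, ε m i) ≤ Real.exp (2 * (2 * tE)) := by
      apply Real.exp_le_exp.2
      linarith [hεtsum m]
    nlinarith [Real.exp_pos (2 * ∑' i, ε m i)]
  have hKnn : 0 ≤ K := le_trans (norm_nonneg _) (hKbd 0 0)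
  choose L hL _hLbd using hconv
  have hLK : ∀ m, ‖L m‖ ≤ K :=
    fun m => le_of_tendsto (hL m).norm (Eventually.of_forall fun j => hKbd m j)
  -- q tends to 0
  have hEtend : Tendsto E atTop (nhds 0) := hE.tendsto_atTop_zero
  have hqtend : ∀ m, Tendsto (fun j => q m j) atTop (nhds 0) := by
    intro m
    rw [← tendsto_add_atTop_iff_nat 1]
    apply squeeze_zero_norm (a := fun j => K * E (m + j + 1))
    · intro j
      rw [hqrec m j, norm_mul]
      have := hd01 (m + j + 1)
      have := hKbd m j
      have := norm_nonneg (p m j)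
      have := hEnn (m + j + 1)
      nlinarith
    · have h0 : Tendsto (fun j : ℕ => E (j + (m + 1))) atTop (nhds 0) := by
        rw [tendsto_add_atTop_iff_nat (m + 1)]
        exact hEtend
      have h1 : Tendsto (fun j : ℕ => K * E (j + (m + 1))) atTop (nhds (K * 0)) :=
        h0.const_mul K
      rw [mul_zero] at h1
      refine h1.congr fun j => ?_
      congr 2
      omega
  -- scalar recurrence for L
  have hLrec : ∀ m, L m = S m 0 0 * L (m+1) + S m 0 1 * L (m+2) := by
    intro m
    have e : ∀ j, p m (j + 2) = S m 0 0 * p (m+1) (j+1) + S m 0 1 * p (m+2) j := by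
      intro j
      show opProd S m (j + 2) 0 0 = _
      rw [opProd_left, Matrix.mul_apply, Fin.sum_univ_two]
      congr 2
      exact hrow1 (m+1) j 0
    have t1 : Tendsto (fun j => p m (j + 2)) atTop (nhds (L m)) :=
      (tendsto_add_atTop_iff_nat 2).2 (hL m)
    have t2 : Tendsto (fun j => S m 0 0 * p (m+1) (j+1) + S m 0 1 * p (m+2) j) atTop
        (nhds (S m 0 0 * L (m+1) + S m 0 1 * L (m+2))) := by
      apply Tendsto.add
      · exact (((tendsto_add_atTop_iff_nat 1).2 (hL (m+1))).const_mul _)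
      · exact ((hL (m+2)).const_mul _)
    exact tendsto_nhds_unique (t1.congr e) t2
  -- the limit matrices
  refine ⟨fun m => !![L m, 0; L (m+1), 0], ?_, ?_⟩
  · intro m
    apply tendsto_pi_nhds.2
    intro i
    rw [tendsto_pi_nhds]
    intro c
    fin_cases i <;> fin_cases c
    · simpa using hL m
    · simpa using hqtend m
    · have h2 : Tendsto (fun j => opProd S m (j + 1) 1 0) atTop (nhds (L (m+1))) :=
        (hL (m+1)).congr fun j => (hrow1 m j 0).symm
      have h3 := (tendsto_add_atTop_iff_nat (f := fun j => opProd S m j 1 0) 1).1 h2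
      simpa using h3
    · have h2 : Tendsto (fun j => opProd S m (j + 1) 1 1) atTop (nhds 0) :=
        (hqtend (m+1)).congr fun j => (hrow1 m j 1).symm
      have h3 := (tendsto_add_atTop_iff_nat (f := fun j => opProd S m j 1 1) 1).1 h2
      simpa using h3
  · intro ah hah
    -- helper notation
    set P : ℕ → ℂ := fun k => ∏ j ∈ Finset.range (k + 1), (2 - n - b + (j : ℂ)) with hPdef
    have hfac : ∀ j : ℕ, (2 - n - b + (j : ℂ)) ≠ 0 := by
      intro j h
      apply hbn ((j : ℤ) + 2)
      push_cast
      linear_combination -h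
    have hP : ∀ k, P k ≠ 0 := by
      intro k
      rw [hPdef]
      exact Finset.prod_ne_zero_iff.2 fun j _ => hfac j
    have hahL : ∀ m : ℕ, ah m = L (m + 1) * mu ^ m / P m := by
      intro m
      rw [hah m]
      simp
      rfl
    constructor
    · -- the Heun recurrence
      intro m
      -- polynomial form of the scalar recurrence at m+1
      have hbm : b - (m:ℂ) ≠ 0 := by
        intro h
        apply hb (m : ℤ)
        push_cast
        linear_combination h
      have hb3 : b - (m:ℂ) + n - 3 ≠ 0 := by
        intro h
        apply hbn ((m : ℤ) + 3)
        push_cast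
        linear_combination h
      have hb4 : b - (m:ℂ) + n - 4 ≠ 0 := by
        intro h
        apply hbn ((m : ℤ) + 4)
        push_cast
        linear_combination h
      have hrecpoly : L (m+1) * ((b - m) * (b - m + n - 3) * (b - m + n - 4))
          = ((b - m) * (b - m + n - 3) + (lam - n + 2)) * (b - m + n - 4) * L (m+2)
            + mu ^ 2 * (b - m + n - 2) * L (m+3) := by
        have h := hLrec (m+1)
        rw [hs00 (m+1), hs01 (m+1)] at h
        push_cast at h
        have e1 : b - ((m:ℂ) + 1) + 1 = b - m := by ring
        have e2 : b - ((m:ℂ) + 1) + n - 2 = b - m + n - 3 := by ring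
        have e3 : b - ((m:ℂ) + 1) + n - 3 = b - m + n - 4 := by ring
        have e4 : b - ((m:ℂ) + 1) + n - 1 = b - m + n - 2 := by ring
        rw [e1, e2, e3, e4] at h
        field_simp at h
        apply mul_right_cancel₀ (mul_ne_zero hbm hb3)
        linear_combination (b - m) * (b - m + n - 3) * h
      -- unfold everything
      have eP1 : P (m + 1) = P m * (2 - n - b + ((m:ℂ) + 1)) := by
        show ∏ j ∈ Finset.range (m + 1 + 1), (2 - n - b + (j : ℂ)) = _
        rw [Finset.prod_range_succ]
        congr 1
        push_cast
        ring
      have eP2 : P (m + 2) = P (m + 1) * (2 - n - b + ((m:ℂ) + 2)) := by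
        show ∏ j ∈ Finset.range (m + 2 + 1), (2 - n - b + (j : ℂ)) = _
        rw [Finset.prod_range_succ]
        congr 1
        push_cast
        ring
      have hg1 : (2 - n - b + ((m:ℂ) + 1)) ≠ 0 := by
        intro h; apply hbn ((m:ℤ) + 3); push_cast; linear_combination -h
      have hg2 : (2 - n - b + ((m:ℂ) + 2)) ≠ 0 := by
        intro h; apply hbn ((m:ℤ) + 4); push_cast; linear_combination -h
      show ((-(m:ℂ) - 1 + b) * (-(m:ℂ) - 1 + b + n - 1) + lam) * ah (m+1)
          - mu * (-(m:ℂ) - 1 + b + n - 1) * ah (m+2) + mu * (-(m:ℂ) - 1 + b + 1) * ah m = 0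
      rw [hahL m, hahL (m+1), hahL (m+2), eP2, eP1]
      set u : ℂ := b - (m:ℂ) with hu
      set D : ℂ := P m * (2 - n - b + ((m:ℂ) + 1)) * (2 - n - b + ((m:ℂ) + 2)) with hD
      have hDne : D ≠ 0 := mul_ne_zero (mul_ne_zero (hP m) hg1) hg2
      have hbr : mu ^ (m+1) * (u * (u + n - 3) * (u + n - 4) * L (m+1)
          - (((u * (u + n - 3)) + (lam - n + 2)) * (u + n - 4) * L (m+2)
            + mu ^ 2 * (u + n - 2) * L (m+3))) = 0 := by
        rw [hu]
        linear_combination mu ^ (m+1) * hrecpoly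
      have hLD : (((-(m:ℂ) - 1 + b) * (-(m:ℂ) - 1 + b + n - 1) + lam)
            * (L (m+1+1) * mu ^ (m+1) / (P m * (2 - n - b + ((m:ℂ) + 1))))
          - mu * (-(m:ℂ) - 1 + b + n - 1)
            * (L (m+2+1) * mu ^ (m+2) / (P m * (2 - n - b + ((m:ℂ) + 1)) * (2 - n - b + ((m:ℂ) + 2))))
          + mu * (-(m:ℂ) - 1 + b + 1) * (L (m+1) * mu ^ m / P m)) * D
          = mu ^ (m+1) * (u * (u + n - 3) * (u + n - 4) * L (m+1)
          - (((u * (u + n - 3)) + (lam - n + 2)) * (u + n - 4) * L (m+2)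
            + mu ^ 2 * (u + n - 2) * L (m+3))) := by
        rw [hu, hD]
        have hPm := hP m
        have e23 : (m + 2 + 1 : ℕ) = m + 3 := rfl
        rw [e23]
        field_simp
        ring
      rw [hbr] at hLD
      have := (mul_eq_zero.mp hLD).resolve_right hDne
      convert this using 2
    · -- summability
      intro w
      set K' : ℝ := K + 1 with hK'def
      have hK'pos : 0 < K' := by rw [hK'def]; linarith
      set g : ℕ → ℝ := fun m => K' * ‖mu * w‖ ^ m / ∏ j ∈ Finset.range (m + 1), ‖2 - n - b + (j:ℂ)‖
        with hgdef
      have hdenpos : ∀ m : ℕ, 0 < ∏ j ∈ Finset.range (m + 1), ‖2 - n - b + (j:ℂ)‖ := by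
        intro m
        apply Finset.prod_pos
        intro j _
        exact norm_pos_iff.2 (hfac j)
      have hgnn : ∀ m, 0 ≤ g m := by
        intro m
        rw [hgdef]
        positivity
      have hgsum : Summable g := by
        apply summable_of_ratio_norm_eventually_le (r := 1/2) (by norm_num)
        filter_upwards [eventually_ge_atTop (⌈2 * ‖mu * w‖ + ‖2 - n - b‖⌉₊)] with m hm
        have hm' : 2 * ‖mu * w‖ + ‖2 - n - b‖ ≤ (m:ℝ) :=
          le_trans (Nat.le_ceil _) (by exact_mod_cast hm)
        have hlow : 2 * ‖mu * w‖ ≤ ‖2 - n - b + ((m:ℕ)+1 : ℕ)‖ := by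
          have h1 := norm_sub_norm_le ((((m:ℕ)+1 : ℕ)):ℂ) (-(2 - n - b))
          have h2 : ‖((((m:ℕ)+1 : ℕ)):ℂ)‖ = (m:ℝ) + 1 := by
            rw [Complex.norm_natCast]; push_cast; ring
          have h3 : ‖-(2 - n - b)‖ = ‖2 - n - b‖ := norm_neg _
          have h4 : ((((m:ℕ)+1 : ℕ)):ℂ) - (-(2 - n - b)) = 2 - n - b + (((m:ℕ)+1 : ℕ)) := by
            ring
          rw [h4, h3, h2] at h1
          have := norm_nonneg (mu * w)
          linarith
        have hgrec : g (m + 1) = g m * (‖mu * w‖ / ‖2 - n - b + (((m:ℕ)+1 : ℕ) : ℂ)‖) := by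
          rw [hgdef]
          show K' * ‖mu * w‖ ^ (m+1) / ∏ j ∈ Finset.range (m + 1 + 1), ‖2 - n - b + (j:ℂ)‖ = _
          rw [Finset.prod_range_succ, pow_succ]
          field_simp
        rw [Real.norm_eq_abs, Real.norm_eq_abs, abs_of_nonneg (hgnn _), abs_of_nonneg (hgnn _),
          hgrec]
        have hpos : 0 < ‖2 - n - b + (((m:ℕ)+1 : ℕ) : ℂ)‖ := by
          apply norm_pos_iff.2
          have := hfac (m + 1)
          exact this
        have hratio : ‖mu * w‖ / ‖2 - n - b + (((m:ℕ)+1 : ℕ) : ℂ)‖ ≤ 1/2 := by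
          rw [div_le_iff₀ hpos]
          linarith
        calc g m * (‖mu * w‖ / ‖2 - n - b + (((m:ℕ)+1 : ℕ) : ℂ)‖) ≤ g m * (1/2) := by
              apply mul_le_mul_of_nonneg_left hratio (hgnn m)
          _ = 1/2 * g m := by ring
      apply Summable.of_norm_bounded hgsum
      intro m
      rw [hahL m]
      rw [norm_mul, norm_div, norm_mul, norm_pow, norm_pow]
      rw [hgdef, hPdef]
      show ‖L (m+1)‖ * ‖mu‖ ^ m / ‖∏ j ∈ Finset.range (m + 1), (2 - n - b + (j:ℂ))‖ * ‖w‖ ^ m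
          ≤ K' * ‖mu * w‖ ^ m / ∏ j ∈ Finset.range (m + 1), ‖2 - n - b + (j:ℂ)‖
      rw [norm_prod]
      have hnum : ‖L (m+1)‖ * ‖mu‖ ^ m * ‖w‖ ^ m ≤ K' * ‖mu * w‖ ^ m := by
        rw [norm_mul, mul_pow]
        have h1 : ‖L (m+1)‖ ≤ K' := by rw [hK'def]; linarith [hLK (m+1)]
        have h2 : 0 ≤ ‖mu‖ ^ m * ‖w‖ ^ m := by positivity
        nlinarith [norm_nonneg (L (m+1))]
      rw [div_mul_eq_mul_div]
      exact div_le_div₀ (by positivity) hnum (hdenpos m) le_rfl
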